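/- Optimal strategy of the AFS model, Version 2 (constant resilience, Theorem 5.1 of Alfonsi–Fruth–Schied as restated in the paper): let ρ > 0 be constant, suppose the function h₂(x) := x·[f(x) − e^{−2ρτ}f(e^{−ρτ}x)]/[f(x) − e^{−ρτ}f(e^{−ρτ}x)] is one-to-one, and suppose x²·inf{f(y) : y ∈ [e^{−ρτ}x, x]} → ∞ as |x| → ∞. Then the cost functional C⁽²⁾ (with ρ̄ ≡ ρ) has a unique minimizer ξ = (ξ₀,…,ξ_N) on Ξ. The initial order ξ₀ is the unique solution of F⁻¹(X₀ − N[ξ₀ − F(e^{−ρτ}F⁻¹(ξ₀))]) = h₂(F⁻¹(ξ₀)); the intermediate orders satisfy ξ₁ = … = ξ_{N−1} = ξ₀ − F(e^{−ρτ}F⁻¹(ξ₀)); the final order is ξ_N = X₀ − ∑_{n=0}^{N−1} ξₙ; and ξₙ > 0 for all n. -/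

import Mathlib

open Real Filter Finset

set_option linter.unusedSectionVars false

/-- `Fi f x = F(x) = ∫₀ˣ f(y) dy`. -/
noncomputable def Fi (f : ℝ → ℝ) (x : ℝ) : ℝ := ∫ y in (0:ℝ)..x, f y

/-- `Ft f x = F̃(x) = ∫₀ˣ y f(y) dy`. -/
noncomputable def Ft (f : ℝ → ℝ) (x : ℝ) : ℝ := ∫ y in (0:ℝ)..x, y * f y

/-- `Gf f Finv = G = F̃ ∘ F⁻¹`. -/
noncomputable def Gf (f Finv : ℝ → ℝ) (x : ℝ) : ℝ := Ft f (Finv x)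

/-- Version 2 dynamics with constant resilience factor `a = e^{−ρτ}`:
`D₀ = 0`, `Dₙ⁺ = F⁻¹(F(Dₙ) + xₙ)`, `D_{n+1} = a·Dₙ⁺`. -/
noncomputable def DvC (f Finv : ℝ → ℝ) (a : ℝ) (x : ℕ → ℝ) : ℕ → ℝ
  | 0 => 0
  | n + 1 => a * Finv (Fi f (DvC f Finv a x n) + x n)

/-- Version 2 cost functional with constant resilience. -/
noncomputable def C2C (f Finv : ℝ → ℝ) (a : ℝ) (N : ℕ) (x : ℕ → ℝ) : ℝ :=
  ∑ n ∈ Finset.range (N + 1),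
    (Gf f Finv (x n + Fi f (DvC f Finv a x n)) - Ft f (DvC f Finv a x n))

/-! ### Auxiliary definitions -/

noncomputable def Lm (f Finv : ℝ → ℝ) (a y : ℝ) : ℝ := Fi f (a * Finv y)

noncomputable def Km (f Finv : ℝ → ℝ) (a y : ℝ) : ℝ := y - Lm f Finv a y

noncomputable def Hm (f Finv : ℝ → ℝ) (a y : ℝ) : ℝ :=
  Gf f Finv y - Gf f Finv (Lm f Finv a y)

noncomputable def h2f (f : ℝ → ℝ) (a : ℝ) : ℝ → ℝ :=
  fun x : ℝ => x * ((f x - a ^ 2 * f (a * x)) / (f x - a * f (a * x)))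

noncomputable def Yv (f Finv : ℝ → ℝ) (a : ℝ) (x : ℕ → ℝ) (n : ℕ) : ℝ :=
  x n + Fi f (DvC f Finv a x n)

noncomputable def Phi (f Finv : ℝ → ℝ) (a : ℝ) (N : ℕ) (X₀ : ℝ) (w : Fin N → ℝ) : ℝ :=
  (∑ i, Hm f Finv a (w i)) + Gf f Finv (X₀ - ∑ i, Km f Finv a (w i))

noncomputable def xw (f Finv : ℝ → ℝ) (a : ℝ) (ys : ℕ → ℝ) : ℕ → ℝ
  | 0 => ys 0
  | n + 1 => ys (n + 1) - Lm f Finv a (ys n)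

noncomputable def ys (f Finv : ℝ → ℝ) (a : ℝ) (N : ℕ) (X₀ : ℝ) (w : Fin N → ℝ) : ℕ → ℝ :=
  fun n => if h : n < N then w ⟨n, h⟩ else X₀ - ∑ i, Km f Finv a (w i)

section Basics

variable {f Finv : ℝ → ℝ} {a : ℝ}

lemma Fi_zero : Fi f 0 = 0 := intervalIntegral.integral_same

lemma Fi_hasDerivAt (hf : Continuous f) (x : ℝ) : HasDerivAt (Fi f) (f x) x :=
  intervalIntegral.integral_hasDerivAt_right (hf.intervalIntegrable _ _)
    (hf.stronglyMeasurableAtFilter _ _) hf.continuousAt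

lemma Fi_continuous (hf : Continuous f) : Continuous (Fi f) := by
  have : Differentiable ℝ (Fi f) := fun x => (Fi_hasDerivAt hf x).differentiableAt
  exact this.continuous

lemma Fi_strictMono (hf : Continuous f) (hfpos : ∀ x, 0 < f x) : StrictMono (Fi f) :=
  strictMono_of_deriv_pos fun x => by rw [(Fi_hasDerivAt hf x).deriv]; exact hfpos x

lemma Ft_hasDerivAt (hf : Continuous f) (x : ℝ) : HasDerivAt (Ft f) (x * f x) x :=
  intervalIntegral.integral_hasDerivAt_right ((continuous_id.mul hf).intervalIntegrable _ _)
    ((continuous_id.mul hf).stronglyMeasurableAtFilter _ _) (continuous_id.mul hf).continuousAt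

lemma Ft_continuous (hf : Continuous f) : Continuous (Ft f) := by
  have : Differentiable ℝ (Ft f) := fun x => (Ft_hasDerivAt hf x).differentiableAt
  exact this.continuous

lemma Ft_zero : Ft f 0 = 0 := intervalIntegral.integral_same

variable (hf : Continuous f) (hfpos : ∀ x, 0 < f x)
  (hFinv₁ : ∀ x, Fi f (Finv x) = x) (hFinv₂ : ∀ x, Finv (Fi f x) = x)

include hf hfpos hFinv₁ hFinv₂

lemma Finv_strictMono : StrictMono Finv := by
  intro x y hxy
  have hm := Fi_strictMono hf hfpos
  rcases lt_trichotomy (Finv x) (Finv y) with h | h | h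
  · exact h
  · exact absurd (by rw [← hFinv₁ x, ← hFinv₁ y, h]) hxy.ne
  · exact absurd (by rw [← hFinv₁ x, ← hFinv₁ y]; exact hm h) (not_lt.2 hxy.le)

lemma Finv_inj : Function.Injective Finv :=
  Function.LeftInverse.injective (g := Fi f) hFinv₁

lemma Finv_continuous : Continuous Finv :=
  (Finv_strictMono hf hfpos hFinv₁ hFinv₂).monotone.continuous_of_surjective
    (fun x => ⟨Fi f x, hFinv₂ x⟩)

lemma Finv_zero : Finv 0 = 0 := by
  have h := hFinv₂ 0; rwa [Fi_zero] at h

lemma Finv_hasDerivAt (y : ℝ) : HasDerivAt Finv (f (Finv y))⁻¹ y :=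
  HasDerivAt.of_local_left_inverse
    ((Finv_continuous hf hfpos hFinv₁ hFinv₂).continuousAt)
    (Fi_hasDerivAt hf (Finv y)) (hfpos _).ne' (Eventually.of_forall hFinv₁)

lemma Finv_tendsto_atTop : Tendsto Finv atTop atTop :=
  tendsto_atTop_atTop_of_monotone (Finv_strictMono hf hfpos hFinv₁ hFinv₂).monotone
    fun b => ⟨Fi f b, (hFinv₂ b).ge⟩

lemma Finv_tendsto_atBot : Tendsto Finv atBot atBot :=
  tendsto_atBot_atBot_of_monotone (Finv_strictMono hf hfpos hFinv₁ hFinv₂).monotone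
    fun b => ⟨Fi f b, (hFinv₂ b).le⟩

end Basics

section Core

variable {f Finv : ℝ → ℝ} {a : ℝ}
variable (hf : Continuous f) (hfpos : ∀ x, 0 < f x)
  (hFinv₁ : ∀ x, Fi f (Finv x) = x) (hFinv₂ : ∀ x, Finv (Fi f x) = x)
  (ha0 : 0 < a) (ha1 : a < 1)
  (hh2 : Function.Injective (h2f f a))

include hf hfpos hFinv₁ hFinv₂ ha0 ha1 hh2

lemma d_pos (x : ℝ) : 0 < f x - a * f (a * x) := by
  have hne : ∀ z : ℝ, f z - a * f (a * z) ≠ 0 := by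
    intro z hz
    rcases eq_or_ne z 0 with rfl | hz0
    · rw [mul_zero] at hz; nlinarith [hfpos 0]
    · apply hz0
      apply hh2
      show z * ((f z - a ^ 2 * f (a * z)) / (f z - a * f (a * z)))
        = 0 * ((f 0 - a ^ 2 * f (a * 0)) / (f 0 - a * f (a * 0)))
      rw [hz, div_zero, mul_zero, zero_mul]
  by_contra hle
  push_neg at hle
  have h0 : (0:ℝ) < f 0 - a * f (a * 0) := by rw [mul_zero]; nlinarith [hfpos 0]
  have hc : ContinuousOn (fun z => f z - a * f (a * z)) (Set.uIcc 0 x) := by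
    have : Continuous (fun z : ℝ => f z - a * f (a * z)) := by fun_prop
    exact this.continuousOn
  have hmem : (0:ℝ) ∈ Set.uIcc ((fun z => f z - a * f (a * z)) 0)
      ((fun z => f z - a * f (a * z)) x) := by
    simp only
    exact Set.mem_uIcc.2 (Or.inr ⟨hle, h0.le⟩)
  obtain ⟨z, _, hz⟩ := intermediate_value_uIcc hc hmem
  exact hne z hz

lemma n_pos (x : ℝ) : 0 < f x - a ^ 2 * f (a * x) := by
  have h1 := d_pos hf hfpos hFinv₁ hFinv₂ ha0 ha1 hh2 x
  have h1a : (0:ℝ) < 1 - a := by linarith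
  have hn' : 0 < a * ((1 - a) * f (a * x)) := mul_pos ha0 (mul_pos h1a (hfpos (a * x)))
  nlinarith [hfpos (a * x)]

lemma h2f_zero : h2f f a 0 = 0 := zero_mul _

lemma h2f_ratio_gt (x : ℝ) :
    1 < (f x - a ^ 2 * f (a * x)) / (f x - a * f (a * x)) := by
  have hd := d_pos hf hfpos hFinv₁ hFinv₂ ha0 ha1 hh2 x
  have h1a : (0:ℝ) < 1 - a := by linarith
  have hn' : 0 < a * ((1 - a) * f (a * x)) := mul_pos ha0 (mul_pos h1a (hfpos (a * x)))
  rw [one_lt_div hd]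
  nlinarith [hfpos (a * x)]

lemma h2f_gt {x : ℝ} (hx : 0 < x) : x < h2f f a x := by
  have h1 := h2f_ratio_gt hf hfpos hFinv₁ hFinv₂ ha0 ha1 hh2 x
  have h2 := mul_lt_mul_of_pos_left h1 hx
  rw [mul_one] at h2
  exact h2

lemma h2f_lt {x : ℝ} (hx : x < 0) : h2f f a x < x := by
  have h1 := h2f_ratio_gt hf hfpos hFinv₁ hFinv₂ ha0 ha1 hh2 x
  have h2 := mul_lt_mul_of_neg_left h1 hx
  rw [mul_one] at h2
  exact h2

lemma h2f_strictMono : StrictMono (h2f f a) := by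
  have hcd : Continuous (fun x : ℝ => f x - a * f (a * x)) := by fun_prop
  have hcn : Continuous (fun x : ℝ => f x - a ^ 2 * f (a * x)) := by fun_prop
  have hc : Continuous (h2f f a) := by
    unfold h2f
    apply Continuous.mul continuous_id
    exact hcn.div hcd fun x => (d_pos hf hfpos hFinv₁ hFinv₂ ha0 ha1 hh2 x).ne'
  rcases hc.strictMono_of_inj hh2 with h | h
  · exact h
  · exfalso
    have h1 := h (zero_lt_one (α := ℝ))
    rw [h2f_zero hf hfpos hFinv₁ hFinv₂ ha0 ha1 hh2] at h1
    have h2 := h2f_gt hf hfpos hFinv₁ hFinv₂ ha0 ha1 hh2 (zero_lt_one (α := ℝ))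
    linarith

lemma Gf_hasDerivAt (y : ℝ) : HasDerivAt (Gf f Finv) (Finv y) y := by
  have h := (Ft_hasDerivAt hf (Finv y)).comp y (Finv_hasDerivAt hf hfpos hFinv₁ hFinv₂ y)
  rwa [mul_inv_cancel_right₀ (hfpos (Finv y)).ne'] at h

lemma Lm_hasDerivAt (y : ℝ) :
    HasDerivAt (Lm f Finv a) (a * f (a * Finv y) * (f (Finv y))⁻¹) y := by
  have hin : HasDerivAt (fun y => a * Finv y) (a * (f (Finv y))⁻¹) y :=
    (Finv_hasDerivAt hf hfpos hFinv₁ hFinv₂ y).const_mul a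
  have h := (Fi_hasDerivAt hf (a * Finv y)).comp y hin
  have hv : f (a * Finv y) * (a * (f (Finv y))⁻¹) = a * f (a * Finv y) * (f (Finv y))⁻¹ := by
    ring
  rwa [hv] at h

lemma Km_hasDerivAt (y : ℝ) :
    HasDerivAt (Km f Finv a) (1 - a * f (a * Finv y) * (f (Finv y))⁻¹) y :=
  (hasDerivAt_id y).sub (Lm_hasDerivAt hf hfpos hFinv₁ hFinv₂ ha0 ha1 hh2 y)

lemma Finv_Lm (y : ℝ) : Finv (Lm f Finv a y) = a * Finv y := hFinv₂ _

lemma Hm_hasDerivAt (y : ℝ) :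
    HasDerivAt (Hm f Finv a)
      (Finv y - a * Finv y * (a * f (a * Finv y) * (f (Finv y))⁻¹)) y := by
  have h1 := Gf_hasDerivAt hf hfpos hFinv₁ hFinv₂ ha0 ha1 hh2 y
  have h2 := (Gf_hasDerivAt hf hfpos hFinv₁ hFinv₂ ha0 ha1 hh2 (Lm f Finv a y)).comp y
    (Lm_hasDerivAt hf hfpos hFinv₁ hFinv₂ ha0 ha1 hh2 y)
  rw [Finv_Lm hf hfpos hFinv₁ hFinv₂ ha0 ha1 hh2] at h2
  exact h1.sub h2

lemma Kd_pos (y : ℝ) : 0 < 1 - a * f (a * Finv y) * (f (Finv y))⁻¹ := by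
  have hd := d_pos hf hfpos hFinv₁ hFinv₂ ha0 ha1 hh2 (Finv y)
  have hfu := hfpos (Finv y)
  rw [sub_pos, ← div_eq_mul_inv, div_lt_one hfu]
  linarith

lemma Km_strictMono : StrictMono (Km f Finv a) := by
  apply strictMono_of_deriv_pos
  intro y
  rw [(Km_hasDerivAt hf hfpos hFinv₁ hFinv₂ ha0 ha1 hh2 y).deriv]
  exact Kd_pos hf hfpos hFinv₁ hFinv₂ ha0 ha1 hh2 y

lemma foc_solve (u v : ℝ)
    (h : u - a * u * (a * f (a * u) * (f u)⁻¹) - v * (1 - a * f (a * u) * (f u)⁻¹) = 0) :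
    h2f f a u = v := by
  have hfu : f u ≠ 0 := (hfpos u).ne'
  have hd : f u - a * f (a * u) ≠ 0 := (d_pos hf hfpos hFinv₁ hFinv₂ ha0 ha1 hh2 u).ne'
  field_simp at h
  rw [mul_comm u a] at h
  show u * ((f u - a ^ 2 * f (a * u)) / (f u - a * f (a * u))) = v
  rw [← mul_div_assoc, div_eq_iff hd]
  nlinarith [h]

lemma Ft_nonneg (x : ℝ) : 0 ≤ Ft f x := by
  rcases le_total 0 x with hx | hx
  · exact intervalIntegral.integral_nonneg hx fun u hu => mul_nonneg hu.1 (hfpos u).le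
  · have h1 : Ft f x = -(∫ y in x..(0:ℝ), y * f y) := intervalIntegral.integral_symm _ _
    rw [h1, neg_nonneg]
    have h2 : (∫ y in x..(0:ℝ), y * f y) ≤ ∫ _y in x..(0:ℝ), (0:ℝ) := by
      apply intervalIntegral.integral_mono_on hx
        ((continuous_id.mul hf).intervalIntegrable _ _) intervalIntegrable_const
      intro s hs
      exact mul_nonpos_of_nonpos_of_nonneg hs.2 (hfpos s).le
    simpa using h2

lemma sInf_img_nonneg (u : ℝ) : 0 ≤ sInf (f '' Set.uIcc (a * u) u) := by
  have hne : (f '' Set.uIcc (a * u) u).Nonempty := ⟨f u, u, Set.right_mem_uIcc, rfl⟩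
  refine le_csInf hne ?_
  rintro y ⟨s, _, rfl⟩
  exact (hfpos s).le

lemma Ft_sub_bound (u : ℝ) :
    (1 - a ^ 2) / 2 * (u ^ 2 * sInf (f '' Set.uIcc (a * u) u)) ≤ Ft f u - Ft f (a * u) := by
  set m := sInf (f '' Set.uIcc (a * u) u) with hmdef
  have hbdd : BddBelow (f '' Set.uIcc (a * u) u) := by
    refine ⟨0, ?_⟩
    rintro y ⟨s, _, rfl⟩
    exact (hfpos s).le
  have hmle : ∀ s ∈ Set.uIcc (a * u) u, m ≤ f s := fun s hs => csInf_le hbdd ⟨s, hs, rfl⟩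
  have hii : ∀ b c : ℝ, IntervalIntegrable (fun s => s * f s) MeasureTheory.volume b c :=
    fun b c => (continuous_id.mul hf).intervalIntegrable _ _
  have hii2 : ∀ b c : ℝ, IntervalIntegrable (fun s => m * s) MeasureTheory.volume b c :=
    fun b c => (continuous_const.mul continuous_id).intervalIntegrable _ _
  have hint : Ft f u - Ft f (a * u) = ∫ s in (a * u)..u, s * f s :=
    intervalIntegral.integral_interval_sub_left (hii 0 u) (hii 0 (a * u))
  rcases le_total 0 u with hu | hu
  · have hau : a * u ≤ u := by nlinarith
    have huicc : Set.uIcc (a * u) u = Set.Icc (a * u) u := Set.uIcc_of_le hau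
    have h1 : (∫ s in (a * u)..u, m * s) ≤ ∫ s in (a * u)..u, s * f s := by
      apply intervalIntegral.integral_mono_on hau (hii2 _ _) (hii _ _)
      intro s hs
      have hs0 : 0 ≤ s := le_trans (by nlinarith) hs.1
      have hms := hmle s (huicc ▸ hs)
      nlinarith
    have h2 : (∫ s in (a * u)..u, m * s) = m * ((u ^ 2 - (a * u) ^ 2) / 2) := by
      rw [intervalIntegral.integral_const_mul, integral_id]
    rw [hint]
    calc (1 - a ^ 2) / 2 * (u ^ 2 * m) = m * ((u ^ 2 - (a * u) ^ 2) / 2) := by ring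
    _ ≤ _ := h2 ▸ h1
  · have hau : u ≤ a * u := by nlinarith
    have huicc : Set.uIcc (a * u) u = Set.Icc u (a * u) := Set.uIcc_of_ge hau
    have hint2 : Ft f u - Ft f (a * u) = -(∫ s in u..(a * u), s * f s) := by
      rw [hint]; exact intervalIntegral.integral_symm _ _
    have h1 : (∫ s in u..(a * u), s * f s) ≤ ∫ s in u..(a * u), m * s := by
      apply intervalIntegral.integral_mono_on hau (hii _ _) (hii2 _ _)
      intro s hs
      have hs0 : s ≤ 0 := le_trans hs.2 (by nlinarith)
      have hms := hmle s (huicc ▸ hs)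
      nlinarith
    have h2 : (∫ s in u..(a * u), m * s) = m * (((a * u) ^ 2 - u ^ 2) / 2) := by
      rw [intervalIntegral.integral_const_mul, integral_id]
    rw [hint2]
    have := h2 ▸ h1
    calc (1 - a ^ 2) / 2 * (u ^ 2 * m) = -(m * (((a * u) ^ 2 - u ^ 2) / 2)) := by ring
    _ ≤ -(∫ s in u..(a * u), s * f s) := by linarith

lemma Hm_eq (y : ℝ) : Hm f Finv a y = Ft f (Finv y) - Ft f (a * Finv y) := by
  rw [Hm, Gf, Gf, Lm, hFinv₂]

lemma Hm_nonneg (y : ℝ) : 0 ≤ Hm f Finv a y := by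
  rw [Hm_eq hf hfpos hFinv₁ hFinv₂ ha0 ha1 hh2]
  refine le_trans ?_ (Ft_sub_bound hf hfpos hFinv₁ hFinv₂ ha0 ha1 hh2 (Finv y))
  have h1 := sInf_img_nonneg hf hfpos hFinv₁ hFinv₂ ha0 ha1 hh2 (Finv y)
  have h2 : (0:ℝ) ≤ (1 - a ^ 2) / 2 := by nlinarith
  positivity

lemma Gf_nonneg (x : ℝ) : 0 ≤ Gf f Finv x := Ft_nonneg hf hfpos hFinv₁ hFinv₂ ha0 ha1 hh2 _

lemma Hm_tendsto_atTop
    (hfinf₁ : Tendsto (fun x : ℝ => x ^ 2 * sInf (f '' Set.uIcc (a * x) x)) atTop atTop) :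
    Tendsto (Hm f Finv a) atTop atTop := by
  have hc : (0:ℝ) < (1 - a ^ 2) / 2 := by nlinarith
  have base : Tendsto (fun u : ℝ => Ft f u - Ft f (a * u)) atTop atTop :=
    tendsto_atTop_mono (fun u => Ft_sub_bound hf hfpos hFinv₁ hFinv₂ ha0 ha1 hh2 u)
      (hfinf₁.const_mul_atTop hc)
  have := base.comp (Finv_tendsto_atTop hf hfpos hFinv₁ hFinv₂)
  refine this.congr fun y => ?_
  exact (Hm_eq hf hfpos hFinv₁ hFinv₂ ha0 ha1 hh2 y).symm

lemma Hm_tendsto_atBot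
    (hfinf₂ : Tendsto (fun x : ℝ => x ^ 2 * sInf (f '' Set.uIcc (a * x) x)) atBot atTop) :
    Tendsto (Hm f Finv a) atBot atTop := by
  have hc : (0:ℝ) < (1 - a ^ 2) / 2 := by nlinarith
  have base : Tendsto (fun u : ℝ => Ft f u - Ft f (a * u)) atBot atTop :=
    tendsto_atTop_mono (fun u => Ft_sub_bound hf hfpos hFinv₁ hFinv₂ ha0 ha1 hh2 u)
      (hfinf₂.const_mul_atTop hc)
  have := base.comp (Finv_tendsto_atBot hf hfpos hFinv₁ hFinv₂)
  refine this.congr fun y => ?_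
  exact (Hm_eq hf hfpos hFinv₁ hFinv₂ ha0 ha1 hh2 y).symm

lemma Gf_continuous : Continuous (Gf f Finv) :=
  (Ft_continuous hf).comp (Finv_continuous hf hfpos hFinv₁ hFinv₂)

lemma Lm_continuous : Continuous (Lm f Finv a) :=
  (Fi_continuous hf).comp (continuous_const.mul (Finv_continuous hf hfpos hFinv₁ hFinv₂))

lemma Km_continuous : Continuous (Km f Finv a) :=
  continuous_id.sub (Lm_continuous hf hfpos hFinv₁ hFinv₂ ha0 ha1 hh2)

lemma Hm_continuous : Continuous (Hm f Finv a) :=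
  (Gf_continuous hf hfpos hFinv₁ hFinv₂ ha0 ha1 hh2).sub
    ((Gf_continuous hf hfpos hFinv₁ hFinv₂ ha0 ha1 hh2).comp
      (Lm_continuous hf hfpos hFinv₁ hFinv₂ ha0 ha1 hh2))

end Core
section Opt

variable {f Finv : ℝ → ℝ} {a : ℝ} {N : ℕ} {X₀ : ℝ}
variable (hf : Continuous f) (hfpos : ∀ x, 0 < f x)
  (hFinv₁ : ∀ x, Fi f (Finv x) = x) (hFinv₂ : ∀ x, Finv (Fi f x) = x)
  (ha0 : 0 < a) (ha1 : a < 1)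
  (hh2 : Function.Injective (h2f f a))

include hf hfpos hFinv₁ hFinv₂ ha0 ha1 hh2

lemma Phi_continuous : Continuous (Phi f Finv a N X₀) := by
  apply Continuous.add
  · exact continuous_finset_sum _ fun i _ =>
      (Hm_continuous hf hfpos hFinv₁ hFinv₂ ha0 ha1 hh2).comp (continuous_apply i)
  · exact (Gf_continuous hf hfpos hFinv₁ hFinv₂ ha0 ha1 hh2).comp (continuous_const.sub
      (continuous_finset_sum _ fun i _ =>
        (Km_continuous hf hfpos hFinv₁ hFinv₂ ha0 ha1 hh2).comp (continuous_apply i)))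

lemma Phi_ge_single (w : Fin N → ℝ) (i : Fin N) :
    Hm f Finv a (w i) ≤ Phi f Finv a N X₀ w := by
  have h1 : Hm f Finv a (w i) ≤ ∑ j, Hm f Finv a (w j) :=
    Finset.single_le_sum
      (fun j _ => Hm_nonneg hf hfpos hFinv₁ hFinv₂ ha0 ha1 hh2 (w j)) (mem_univ i)
  have h2 := Gf_nonneg hf hfpos hFinv₁ hFinv₂ ha0 ha1 hh2
    (X₀ - ∑ j, Km f Finv a (w j))
  rw [Phi]; linarith

lemma Phi_exists_min
    (hfinf₁ : Tendsto (fun x : ℝ => x ^ 2 * sInf (f '' Set.uIcc (a * x) x)) atTop atTop)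
    (hfinf₂ : Tendsto (fun x : ℝ => x ^ 2 * sInf (f '' Set.uIcc (a * x) x)) atBot atTop) :
    ∃ w : Fin N → ℝ, ∀ w', Phi f Finv a N X₀ w ≤ Phi f Finv a N X₀ w' := by
  set c := Phi f Finv a N X₀ (fun _ => 0) with hc
  obtain ⟨R₁, hR₁⟩ := eventually_atTop.1
    ((Hm_tendsto_atTop hf hfpos hFinv₁ hFinv₂ ha0 ha1 hh2 hfinf₁).eventually_gt_atTop c)
  obtain ⟨R₂, hR₂⟩ := eventually_atBot.1
    ((Hm_tendsto_atBot hf hfpos hFinv₁ hFinv₂ ha0 ha1 hh2 hfinf₂).eventually_gt_atTop c)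
  set lo := min R₂ 0 with hlo
  set hi := max R₁ 0 with hhi
  have h0S : (fun _ : Fin N => (0:ℝ)) ∈ Set.Icc (fun _ : Fin N => lo) (fun _ : Fin N => hi) := by
    constructor <;> intro i
    · exact min_le_right _ _
    · exact le_max_right _ _
  obtain ⟨w, hwS, hw⟩ := isCompact_Icc.exists_isMinOn ⟨_, h0S⟩
    (Phi_continuous hf hfpos hFinv₁ hFinv₂ ha0 ha1 hh2).continuousOn
  refine ⟨w, fun w' => ?_⟩
  by_cases hw' : w' ∈ Set.Icc (fun _ : Fin N => lo) (fun _ : Fin N => hi)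
  · exact isMinOn_iff.1 hw w' hw'
  · have hex : ∃ i, w' i < lo ∨ hi < w' i := by
      by_contra hcon
      push_neg at hcon
      exact hw' ⟨fun i => (hcon i).1, fun i => (hcon i).2⟩
    obtain ⟨i, hi'⟩ := hex
    have hgt : c < Hm f Finv a (w' i) := by
      rcases hi' with h | h
      · exact hR₂ _ (le_trans h.le (min_le_left _ _))
      · exact hR₁ _ (le_trans (le_max_left _ _) h.le)
    have h1 : Phi f Finv a N X₀ w ≤ c := isMinOn_iff.1 hw _ h0S
    have h2 := Phi_ge_single (X₀ := X₀) hf hfpos hFinv₁ hFinv₂ ha0 ha1 hh2 w' i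
    linarith

lemma Phi_min_const (hN : 0 < N) (w : Fin N → ℝ)
    (hmin : ∀ w', Phi f Finv a N X₀ w ≤ Phi f Finv a N X₀ w') :
    ∃ z : ℝ, (∀ i, w i = z) ∧
      Finv (X₀ - (N:ℝ) * Km f Finv a z) = h2f f a (Finv z) := by
  classical
  have hfoc : ∀ i, h2f f a (Finv (w i)) = Finv (X₀ - ∑ x, Km f Finv a (w x)) := by
    intro i
    have e1 : ∀ (g : ℝ → ℝ) (t : ℝ), (∑ x : Fin N, g (Function.update w i t x))
        = g t + ∑ x ∈ univ \ {i}, g (w x) := by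
      intro g t
      have hupd : (fun x => g (Function.update w i t x))
          = Function.update (fun j => g (w j)) i (g t) := by
        funext x
        rcases eq_or_ne x i with rfl | hx
        · simp
        · simp [Function.update_of_ne hx]
      calc (∑ x : Fin N, g (Function.update w i t x))
          = ∑ x : Fin N, Function.update (fun j => g (w j)) i (g t) x := by rw [hupd]
        _ = g t + ∑ x ∈ univ \ {i}, g (w x) :=
          Finset.sum_update_of_mem (Finset.mem_univ i) (fun j => g (w j)) (g t)
    have hsum : ∀ t, Phi f Finv a N X₀ (Function.update w i t) =
        (Hm f Finv a t + Gf f Finv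
          (X₀ - (Km f Finv a t + ∑ x ∈ univ \ {i}, Km f Finv a (w x))))
          + ∑ x ∈ univ \ {i}, Hm f Finv a (w x) := by
      intro t
      rw [Phi, e1 (Hm f Finv a) t, e1 (Km f Finv a) t]
      ring
    have hT : Km f Finv a (w i) + ∑ x ∈ univ \ {i}, Km f Finv a (w x)
        = ∑ x, Km f Finv a (w x) := by
      rw [← Finset.erase_eq]
      exact Finset.add_sum_erase univ (fun x => Km f Finv a (w x)) (mem_univ i)
    have hloc : IsLocalMin (fun t => Hm f Finv a t + Gf f Finv
        (X₀ - (Km f Finv a t + ∑ x ∈ univ \ {i}, Km f Finv a (w x)))) (w i) := by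
      apply Filter.Eventually.of_forall
      intro t
      have h1 := hmin (Function.update w i t)
      rw [hsum t] at h1
      have h2 := hsum (w i)
      rw [Function.update_eq_self] at h2
      rw [h2] at h1
      simp only at h1 ⊢
      linarith
    have hK := Km_hasDerivAt hf hfpos hFinv₁ hFinv₂ ha0 ha1 hh2 (w i)
    have h2 : HasDerivAt
        (fun t => X₀ - (Km f Finv a t + ∑ x ∈ univ \ {i}, Km f Finv a (w x)))
        (-(1 - a * f (a * Finv (w i)) * (f (Finv (w i)))⁻¹)) (w i) :=
      ((hK).add_const _).const_sub X₀
    have h3 := (Gf_hasDerivAt hf hfpos hFinv₁ hFinv₂ ha0 ha1 hh2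
      (X₀ - (Km f Finv a (w i) + ∑ x ∈ univ \ {i}, Km f Finv a (w x)))).comp (w i) h2
    have h4 := (Hm_hasDerivAt hf hfpos hFinv₁ hFinv₂ ha0 ha1 hh2 (w i)).add h3
    have h5 := hloc.hasDerivAt_eq_zero h4
    rw [hT] at h5
    apply foc_solve hf hfpos hFinv₁ hFinv₂ ha0 ha1 hh2
    linarith [h5]
  have hconst : ∀ i j, w i = w j := by
    intro i j
    have h1 := (hfoc i).trans (hfoc j).symm
    exact Finv_inj hf hfpos hFinv₁ hFinv₂ (hh2 h1)
  set i0 : Fin N := ⟨0, hN⟩ with hi0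
  refine ⟨w i0, fun i => hconst i i0, ?_⟩
  have hsumT : ∑ x, Km f Finv a (w x) = (N:ℝ) * Km f Finv a (w i0) := by
    rw [Finset.sum_congr rfl fun x _ => by rw [hconst x i0]]
    rw [Finset.sum_const, Finset.card_univ, Fintype.card_fin, nsmul_eq_mul]
  rw [← hsumT]
  exact (hfoc i0).symm

lemma eq_unique (hN : 0 < N) {z₁ z₂ : ℝ}
    (h₁ : Finv (X₀ - (N:ℝ) * Km f Finv a z₁) = h2f f a (Finv z₁))
    (h₂ : Finv (X₀ - (N:ℝ) * Km f Finv a z₂) = h2f f a (Finv z₂)) : z₁ = z₂ := by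
  have hNpos : (0:ℝ) < N := Nat.cast_pos.2 hN
  have hFm := Finv_strictMono hf hfpos hFinv₁ hFinv₂
  have hKm := Km_strictMono hf hfpos hFinv₁ hFinv₂ ha0 ha1 hh2
  have hh2m := h2f_strictMono hf hfpos hFinv₁ hFinv₂ ha0 ha1 hh2
  rcases lt_trichotomy z₁ z₂ with h | h | h
  · exfalso
    have hK : Km f Finv a z₁ < Km f Finv a z₂ := hKm h
    have hL : Finv (X₀ - N * Km f Finv a z₂) < Finv (X₀ - N * Km f Finv a z₁) :=
      hFm (by nlinarith)
    have hR : h2f f a (Finv z₁) < h2f f a (Finv z₂) := hh2m (hFm h)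
    rw [h₁, h₂] at hL
    linarith
  · exact h
  · exfalso
    have hK : Km f Finv a z₂ < Km f Finv a z₁ := hKm h
    have hL : Finv (X₀ - N * Km f Finv a z₁) < Finv (X₀ - N * Km f Finv a z₂) :=
      hFm (by nlinarith)
    have hR : h2f f a (Finv z₂) < h2f f a (Finv z₁) := hh2m (hFm h)
    rw [h₁, h₂] at hL
    linarith

end Opt

section Transfer

variable {f Finv : ℝ → ℝ} {a : ℝ} {N : ℕ} {X₀ : ℝ}

lemma Fi_DvC_zero (x : ℕ → ℝ) : Fi f (DvC f Finv a x 0) = 0 := by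
  rw [show DvC f Finv a x 0 = 0 from rfl, Fi_zero]

lemma Fi_DvC_succ (x : ℕ → ℝ) (n : ℕ) :
    Fi f (DvC f Finv a x (n + 1)) = Lm f Finv a (Yv f Finv a x n) := by
  show Fi f (a * Finv (Fi f (DvC f Finv a x n) + x n))
    = Fi f (a * Finv (x n + Fi f (DvC f Finv a x n)))
  rw [add_comm]

lemma sum_x_eq (x : ℕ → ℝ) : ∑ n ∈ range (N + 1), x n
    = Yv f Finv a x N + ∑ n ∈ range N, Km f Finv a (Yv f Finv a x n) := by
  have hterm : ∀ n, x n = Yv f Finv a x n - Fi f (DvC f Finv a x n) := by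
    intro n
    show x n = (x n + Fi f (DvC f Finv a x n)) - Fi f (DvC f Finv a x n)
    ring
  rw [Finset.sum_congr rfl fun n _ => hterm n, Finset.sum_sub_distrib]
  have h2 : ∑ n ∈ range (N + 1), Fi f (DvC f Finv a x n)
      = ∑ n ∈ range N, Lm f Finv a (Yv f Finv a x n) := by
    rw [Finset.sum_range_succ', Fi_DvC_zero, add_zero]
    exact Finset.sum_congr rfl fun n _ => by rw [Fi_DvC_succ]
  rw [h2, Finset.sum_range_succ]
  have h3 : ∑ n ∈ range N, Km f Finv a (Yv f Finv a x n)
      = ∑ n ∈ range N, Yv f Finv a x n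
        - ∑ n ∈ range N, Lm f Finv a (Yv f Finv a x n) := by
    rw [← Finset.sum_sub_distrib]
    exact Finset.sum_congr rfl fun n _ => rfl
  rw [h3]; ring

lemma Yv_xw (ysq : ℕ → ℝ) (n : ℕ) : Yv f Finv a (xw f Finv a ysq) n = ysq n := by
  induction n with
  | zero =>
    show xw f Finv a ysq 0 + Fi f (DvC f Finv a (xw f Finv a ysq) 0) = ysq 0
    rw [Fi_DvC_zero, add_zero]
    rfl
  | succ n ih =>
    show xw f Finv a ysq (n + 1) + Fi f (DvC f Finv a (xw f Finv a ysq) (n + 1)) = ysq (n + 1)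
    rw [Fi_DvC_succ, ih]
    show ysq (n + 1) - Lm f Finv a (ysq n) + Lm f Finv a (ysq n) = ysq (n + 1)
    ring

lemma ys_lt (w : Fin N → ℝ) {n : ℕ} (h : n < N) : ys f Finv a N X₀ w n = w ⟨n, h⟩ :=
  dif_pos h

lemma ys_N (w : Fin N → ℝ) : ys f Finv a N X₀ w N = X₀ - ∑ i, Km f Finv a (w i) :=
  dif_neg (lt_irrefl N)

lemma km_ys_sum (w : Fin N → ℝ) :
    ∑ n ∈ range N, Km f Finv a (ys f Finv a N X₀ w n) = ∑ i, Km f Finv a (w i) := by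
  rw [← Fin.sum_univ_eq_sum_range (fun n => Km f Finv a (ys f Finv a N X₀ w n)) N]
  exact Finset.sum_congr rfl fun i _ => by rw [ys_lt w i.isLt]

lemma hm_ys_sum (w : Fin N → ℝ) :
    ∑ n ∈ range N, Hm f Finv a (ys f Finv a N X₀ w n) = ∑ i, Hm f Finv a (w i) := by
  rw [← Fin.sum_univ_eq_sum_range (fun n => Hm f Finv a (ys f Finv a N X₀ w n)) N]
  exact Finset.sum_congr rfl fun i _ => by rw [ys_lt w i.isLt]

lemma sum_xw (w : Fin N → ℝ) :
    ∑ n ∈ range (N + 1), xw f Finv a (ys f Finv a N X₀ w) n = X₀ := by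
  have h := sum_x_eq (f := f) (Finv := Finv) (a := a) (N := N)
    (xw f Finv a (ys f Finv a N X₀ w))
  have hKc : ∀ n, Km f Finv a (Yv f Finv a (xw f Finv a (ys f Finv a N X₀ w)) n)
      = Km f Finv a (ys f Finv a N X₀ w n) := fun n => by rw [Yv_xw]
  rw [h, Yv_xw, ys_N, Finset.sum_congr rfl fun n _ => hKc n, km_ys_sum]
  ring

variable (hf : Continuous f) (hfpos : ∀ x, 0 < f x)
  (hFinv₁ : ∀ x, Fi f (Finv x) = x) (hFinv₂ : ∀ x, Finv (Fi f x) = x)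

include hf hfpos hFinv₁ hFinv₂

lemma C2C_eq (x : ℕ → ℝ) : C2C f Finv a N x =
    Gf f Finv (Yv f Finv a x N) + ∑ n ∈ range N, Hm f Finv a (Yv f Finv a x n) := by
  have hterm : ∀ n, Gf f Finv (x n + Fi f (DvC f Finv a x n)) - Ft f (DvC f Finv a x n)
      = Gf f Finv (Yv f Finv a x n) - Gf f Finv (Fi f (DvC f Finv a x n)) := by
    intro n
    have h : Ft f (DvC f Finv a x n) = Gf f Finv (Fi f (DvC f Finv a x n)) := by
      rw [Gf, hFinv₂]
    rw [h]; rfl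
  rw [C2C, Finset.sum_congr rfl fun n _ => hterm n, Finset.sum_sub_distrib]
  have h2 : ∑ n ∈ range (N + 1), Gf f Finv (Fi f (DvC f Finv a x n))
      = ∑ n ∈ range N, Gf f Finv (Lm f Finv a (Yv f Finv a x n)) := by
    rw [Finset.sum_range_succ']
    have h0 : Gf f Finv (Fi f (DvC f Finv a x 0)) = 0 := by
      rw [Fi_DvC_zero, Gf, Finv_zero hf hfpos hFinv₁ hFinv₂, Ft_zero]
    rw [h0, add_zero]
    exact Finset.sum_congr rfl fun n _ => by rw [Fi_DvC_succ]
  rw [h2, Finset.sum_range_succ]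
  have h3 : ∑ n ∈ range N, Hm f Finv a (Yv f Finv a x n)
      = ∑ n ∈ range N, Gf f Finv (Yv f Finv a x n)
        - ∑ n ∈ range N, Gf f Finv (Lm f Finv a (Yv f Finv a x n)) := by
    rw [← Finset.sum_sub_distrib]
    exact Finset.sum_congr rfl fun n _ => rfl
  rw [h3]; ring

lemma C2C_xw (w : Fin N → ℝ) :
    C2C f Finv a N (xw f Finv a (ys f Finv a N X₀ w)) = Phi f Finv a N X₀ w := by
  rw [C2C_eq hf hfpos hFinv₁ hFinv₂]
  simp only [Yv_xw]
  rw [ys_N, hm_ys_sum, Phi]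
  ring

lemma C2C_eq_Phi (x : ℕ → ℝ) (hx : ∑ n ∈ range (N + 1), x n = X₀) :
    C2C f Finv a N x = Phi f Finv a N X₀ (fun i : Fin N => Yv f Finv a x i) := by
  rw [C2C_eq hf hfpos hFinv₁ hFinv₂, Phi]
  have h1 : ∑ n ∈ range N, Hm f Finv a (Yv f Finv a x n)
      = ∑ i : Fin N, Hm f Finv a (Yv f Finv a x i) :=
    (Fin.sum_univ_eq_sum_range (fun n => Hm f Finv a (Yv f Finv a x n)) N).symm
  have h2 : ∑ i : Fin N, Km f Finv a (Yv f Finv a x i)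
      = ∑ n ∈ range N, Km f Finv a (Yv f Finv a x n) :=
    Fin.sum_univ_eq_sum_range (fun n => Km f Finv a (Yv f Finv a x n)) N
  have h3 : Yv f Finv a x N = X₀ - ∑ n ∈ range N, Km f Finv a (Yv f Finv a x n) := by
    have hs := sum_x_eq (f := f) (Finv := Finv) (a := a) (N := N) x
    rw [hx] at hs
    linarith
  rw [h1, h2, ← h3]
  ring

end Transfer

lemma xw_succ {f Finv : ℝ → ℝ} {a : ℝ} (ysq : ℕ → ℝ) (m : ℕ) :
    xw f Finv a ysq (m + 1) = ysq (m + 1) - Lm f Finv a (ysq m) := rfl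

lemma xw_zero {f Finv : ℝ → ℝ} {a : ℝ} (ysq : ℕ → ℝ) :
    xw f Finv a ysq 0 = ysq 0 := rfl

/-- Optimal strategy of the AFS model, Version 2 (constant resilience speed `ρ`). -/
theorem afs_version2_optimal_strategy
    (f Finv : ℝ → ℝ) (hf : Continuous f) (hfpos : ∀ x, 0 < f x)
    (htop : Tendsto (Fi f) atTop atTop) (hbot : Tendsto (Fi f) atBot atBot)
    (hFinv₁ : ∀ x, Fi f (Finv x) = x) (hFinv₂ : ∀ x, Finv (Fi f x) = x)
    (τ : ℝ) (hτ : 0 < τ) (ρc : ℝ) (hρc : 0 < ρc)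
    (a : ℝ) (ha : a = Real.exp (-(ρc * τ)))
    (N : ℕ) (hN : 1 ≤ N) (X₀ : ℝ) (hX₀ : 0 < X₀)
    (hh2 : Function.Injective
      (fun x : ℝ => x * ((f x - a ^ 2 * f (a * x)) / (f x - a * f (a * x)))))
    (hfinf₁ : Tendsto (fun x : ℝ => x ^ 2 * sInf (f '' Set.uIcc (a * x) x)) atTop atTop)
    (hfinf₂ : Tendsto (fun x : ℝ => x ^ 2 * sInf (f '' Set.uIcc (a * x) x)) atBot atTop) :
    ∃ ξ : ℕ → ℝ,
      (∑ n ∈ Finset.range (N + 1), ξ n = X₀) ∧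
      (∀ y : ℕ → ℝ, (∑ n ∈ Finset.range (N + 1), y n = X₀) →
        C2C f Finv a N ξ ≤ C2C f Finv a N y) ∧
      (∀ y : ℕ → ℝ, (∑ n ∈ Finset.range (N + 1), y n = X₀) →
        (∀ z : ℕ → ℝ, (∑ n ∈ Finset.range (N + 1), z n = X₀) →
          C2C f Finv a N y ≤ C2C f Finv a N z) →
        ∀ n ≤ N, y n = ξ n) ∧
      (Finv (X₀ - (N : ℝ) * (ξ 0 - Fi f (a * Finv (ξ 0)))) =
        Finv (ξ 0) * ((f (Finv (ξ 0)) - a ^ 2 * f (a * Finv (ξ 0))) /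
          (f (Finv (ξ 0)) - a * f (a * Finv (ξ 0))))) ∧
      (∀ z : ℝ, Finv (X₀ - (N : ℝ) * (z - Fi f (a * Finv z))) =
        Finv z * ((f (Finv z) - a ^ 2 * f (a * Finv z)) /
          (f (Finv z) - a * f (a * Finv z))) → z = ξ 0) ∧
      (∀ n : ℕ, 1 ≤ n → n < N → ξ n = ξ 0 - Fi f (a * Finv (ξ 0))) ∧
      (ξ N = X₀ - ∑ n ∈ Finset.range N, ξ n) ∧
      (∀ n ≤ N, 0 < ξ n) := by
  have ha0 : 0 < a := by rw [ha]; exact Real.exp_pos _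
  have ha1 : a < 1 := by
    rw [ha]
    calc Real.exp (-(ρc * τ)) < Real.exp 0 := Real.exp_lt_exp.2 (by nlinarith)
    _ = 1 := Real.exp_zero
  have hh2' : Function.Injective (h2f f a) := hh2
  have hN0 : 0 < N := hN
  obtain ⟨w, hw⟩ := Phi_exists_min (N := N) (X₀ := X₀)
    hf hfpos hFinv₁ hFinv₂ ha0 ha1 hh2' hfinf₁ hfinf₂
  obtain ⟨z, hwz, heq⟩ := Phi_min_const hf hfpos hFinv₁ hFinv₂ ha0 ha1 hh2' hN0 w hw
  set ξ : ℕ → ℝ := xw f Finv a (ys f Finv a N X₀ w) with hξdef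
  have hsum : ∑ n ∈ Finset.range (N + 1), ξ n = X₀ := sum_xw w
  have hcost : C2C f Finv a N ξ = Phi f Finv a N X₀ w :=
    C2C_xw hf hfpos hFinv₁ hFinv₂ w
  have hmin2 : ∀ y : ℕ → ℝ, (∑ n ∈ Finset.range (N + 1), y n = X₀) →
      C2C f Finv a N ξ ≤ C2C f Finv a N y := by
    intro y hy
    rw [hcost, C2C_eq_Phi hf hfpos hFinv₁ hFinv₂ y hy]
    exact hw _
  have hξ0 : ξ 0 = z := by
    rw [hξdef, xw_zero, ys_lt w hN0]
    exact hwz _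
  have hξmid : ∀ n, 1 ≤ n → n < N → ξ n = z - Lm f Finv a z := by
    intro n h1 h2
    obtain ⟨m, rfl⟩ : ∃ m, n = m + 1 := ⟨n - 1, by omega⟩
    rw [hξdef, xw_succ, ys_lt w h2, ys_lt w (show m < N by omega), hwz, hwz]
  have hξN : ξ N = X₀ - ∑ n ∈ Finset.range N, ξ n := by
    have h := hsum
    rw [Finset.sum_range_succ] at h
    linarith
  have huniq : ∀ y : ℕ → ℝ, (∑ n ∈ Finset.range (N + 1), y n = X₀) →
      (∀ z' : ℕ → ℝ, (∑ n ∈ Finset.range (N + 1), z' n = X₀) →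
        C2C f Finv a N y ≤ C2C f Finv a N z') →
      ∀ n ≤ N, y n = ξ n := by
    intro y hy hymin
    have hYmin : ∀ w', Phi f Finv a N X₀ (fun i : Fin N => Yv f Finv a y i)
        ≤ Phi f Finv a N X₀ w' := by
      intro w'
      rw [← C2C_eq_Phi hf hfpos hFinv₁ hFinv₂ y hy,
        ← C2C_xw hf hfpos hFinv₁ hFinv₂ w']
      exact hymin _ (sum_xw w')
    obtain ⟨zy, hzyc, heqy⟩ := Phi_min_const hf hfpos hFinv₁ hFinv₂ ha0 ha1 hh2' hN0 _ hYmin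
    have hzz : zy = z := eq_unique hf hfpos hFinv₁ hFinv₂ ha0 ha1 hh2' hN0 heqy heq
    have hYk : ∀ j, j < N → Yv f Finv a y j = z := by
      intro j hj
      have h := hzyc ⟨j, hj⟩
      simp only at h
      rw [hzz] at h
      exact h
    have hlt : ∀ k, k < N → y k = ξ k := by
      intro k hk
      rcases k with _ | m
      · have h0 : Yv f Finv a y 0 = y 0 := by
          show y 0 + Fi f (DvC f Finv a y 0) = y 0
          rw [Fi_DvC_zero, add_zero]
        rw [hξ0, ← hYk 0 hk]
        exact h0.symm
      · have hm : m < N := by omega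
        have hY1 : Yv f Finv a y (m + 1) = y (m + 1) + Lm f Finv a (Yv f Finv a y m) := by
          show y (m + 1) + Fi f (DvC f Finv a y (m + 1)) = _
          rw [Fi_DvC_succ]
        have hz1 := hYk (m + 1) hk
        rw [hY1, hYk m hm] at hz1
        rw [hξmid (m + 1) (by omega) hk]
        linarith
    intro n hn
    rcases lt_or_eq_of_le hn with h | h
    · exact hlt n h
    · subst h
      have hyN : y n = X₀ - ∑ k ∈ Finset.range n, y k := by
        have h' := hy
        rw [Finset.sum_range_succ] at h'
        linarith
      have hsum' : ∑ k ∈ Finset.range n, y k = ∑ k ∈ Finset.range n, ξ k :=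
        Finset.sum_congr rfl fun k hk => hlt k (Finset.mem_range.1 hk)
      rw [hyN, hsum', ← hξN]
  have heq' : Finv (X₀ - (N : ℝ) * (ξ 0 - Fi f (a * Finv (ξ 0)))) =
      Finv (ξ 0) * ((f (Finv (ξ 0)) - a ^ 2 * f (a * Finv (ξ 0))) /
        (f (Finv (ξ 0)) - a * f (a * Finv (ξ 0)))) := by
    rw [hξ0]
    exact heq
  have huniq5 : ∀ z' : ℝ, Finv (X₀ - (N : ℝ) * (z' - Fi f (a * Finv z'))) =
      Finv z' * ((f (Finv z') - a ^ 2 * f (a * Finv z')) /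
        (f (Finv z') - a * f (a * Finv z'))) → z' = ξ 0 := by
    intro z' hz'
    rw [hξ0]
    exact eq_unique hf hfpos hFinv₁ hFinv₂ ha0 ha1 hh2' hN0 hz' heq
  have hmid6 : ∀ n : ℕ, 1 ≤ n → n < N → ξ n = ξ 0 - Fi f (a * Finv (ξ 0)) := by
    intro n h1 h2
    rw [hξ0, hξmid n h1 h2]
    rfl
  -- positivity
  have hFi_mono := Fi_strictMono hf hfpos
  have hu : 0 < Finv z := by
    by_contra hcon
    push_neg at hcon
    have hzF : Fi f (Finv z) = z := hFinv₁ z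
    have hKle : Km f Finv a z ≤ 0 := by
      show z - Fi f (a * Finv z) ≤ 0
      have h1 : Finv z ≤ a * Finv z := by nlinarith
      have h2 := hFi_mono.monotone h1
      rw [hzF] at h2
      linarith
    have hvle : h2f f a (Finv z) ≤ 0 := by
      rcases lt_or_eq_of_le hcon with h | h
      · exact le_trans (h2f_lt hf hfpos hFinv₁ hFinv₂ ha0 ha1 hh2' h).le hcon
      · rw [h, h2f_zero hf hfpos hFinv₁ hFinv₂ ha0 ha1 hh2']
    have h5 : Finv (X₀ - (N : ℝ) * Km f Finv a z) ≤ 0 := by rw [heq]; exact hvle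
    have h6 : X₀ - (N : ℝ) * Km f Finv a z ≤ 0 := by
      have h7 := hFi_mono.monotone h5
      rw [hFinv₁, Fi_zero] at h7
      exact h7
    have hNK : (N : ℝ) * Km f Finv a z ≤ 0 :=
      mul_nonpos_iff.2 (Or.inl ⟨Nat.cast_nonneg N, hKle⟩)
    linarith
  have hzpos : 0 < z := by
    have h1 := hFi_mono hu
    rw [Fi_zero, hFinv₁] at h1
    exact h1
  have hKpos : 0 < Km f Finv a z := by
    show 0 < z - Fi f (a * Finv z)
    have hau : a * Finv z < Finv z := by nlinarith
    have h1 := hFi_mono hau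
    rw [hFinv₁] at h1
    linarith
  have hvgt : Finv z < Finv (X₀ - (N : ℝ) * Km f Finv a z) := by
    rw [heq]
    exact h2f_gt hf hfpos hFinv₁ hFinv₂ ha0 ha1 hh2' hu
  have hlastpos : 0 < (X₀ - (N : ℝ) * Km f Finv a z) - Fi f (a * Finv z) := by
    have h7 : a * Finv z < Finv (X₀ - (N : ℝ) * Km f Finv a z) := by nlinarith
    have h8 := hFi_mono h7
    rw [hFinv₁] at h8
    linarith
  have hsumKw : ∑ i, Km f Finv a (w i) = (N : ℝ) * Km f Finv a z := by
    rw [Finset.sum_congr rfl fun x _ => by rw [hwz x], Finset.sum_const,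
      Finset.card_univ, Fintype.card_fin, nsmul_eq_mul]
  have hξNval : ξ N = (X₀ - (N : ℝ) * Km f Finv a z) - Lm f Finv a z := by
    obtain ⟨m, hm⟩ : ∃ m, N = m + 1 := ⟨N - 1, by omega⟩
    have hys_m : ys f Finv a N X₀ w m = z := by
      rw [ys_lt w (show m < N by omega)]
      exact hwz _
    have hys_N : ys f Finv a N X₀ w N = X₀ - (N : ℝ) * Km f Finv a z := by
      rw [ys_N, hsumKw]
    have hstep : ξ N = ys f Finv a N X₀ w N - Lm f Finv a (ys f Finv a N X₀ w m) := by
      conv_lhs => rw [hm]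
      rw [hξdef, xw_succ, ← hm]
    rw [hstep, hys_m, hys_N]
  have hpos : ∀ n ≤ N, 0 < ξ n := by
    intro n hn
    rcases Nat.eq_zero_or_pos n with rfl | hn1
    · rw [hξ0]; exact hzpos
    rcases lt_or_eq_of_le hn with h | h
    · rw [hξmid n hn1 h]
      exact hKpos
    · subst h
      rw [hξNval]
      exact hlastpos
  exact ⟨ξ, hsum, hmin2, huniq, heq', huniq5, hmid6, hξN, hpos⟩
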